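/- The Stone–Čech compactification βℕ of the natural numbers (with the discrete topology) is not a W-space: there exists a point of βℕ which is not a W-point of βℕ. -/

import Mathlib

open Filter Set Topology

/-- `x` is a W-point: player I has a winning strategy in Gruenhage's game G(x), where
player I chooses open sets containing `x` and player II picks points in them; player I
wins when `x` is an accumulation point (cluster point) of the resulting sequence. -/
def IsWPoint {X : Type*} [TopologicalSpace X] (x : X) : Prop :=
  ∃ σ : List X → Set X,
    (∀ h : List X, IsOpen (σ h) ∧ x ∈ σ h) ∧
    ∀ p : ℕ → X,
      (∀ n : ℕ, p n ∈ σ (List.ofFn fun i : Fin n => p i)) →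
      MapClusterPt x atTop p

open Classical in
/-- Pick a member of `S` avoiding the finite set `F`. -/
noncomputable def freshPick (S : Set ℕ) (F : Finset ℕ) : ℕ :=
  if h : (S \ ↑F).Nonempty then h.choose else 0

lemma freshPick_spec {S : Set ℕ} (hS : S.Infinite) (F : Finset ℕ) :
    freshPick S F ∈ S ∧ freshPick S F ∉ F := by
  have h : (S \ ↑F).Nonempty := (hS.diff F.finite_toSet).nonempty
  rw [freshPick, dif_pos h]
  exact ⟨h.choose_spec.1, fun hm => h.choose_spec.2 (by exact_mod_cast hm)⟩

noncomputable def stepA (S : List ℕ → Set ℕ) (la lb : List ℕ) : ℕ :=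
  freshPick (S la) (la.toFinset ∪ lb.toFinset)

noncomputable def stepB (S : List ℕ → Set ℕ) (la lb : List ℕ) : ℕ :=
  freshPick (S lb) (insert (stepA S la lb) (la.toFinset ∪ lb.toFinset))

/-- Two interleaved plays against the strategy encoded by `S`. -/
noncomputable def twoPlays (S : List ℕ → Set ℕ) : ℕ → List ℕ × List ℕ
  | 0 => ([], [])
  | n + 1 =>
      ((twoPlays S n).1 ++ [stepA S (twoPlays S n).1 (twoPlays S n).2],
       (twoPlays S n).2 ++ [stepB S (twoPlays S n).1 (twoPlays S n).2])

noncomputable def aSeq (S : List ℕ → Set ℕ) (n : ℕ) : ℕ :=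
  stepA S (twoPlays S n).1 (twoPlays S n).2

noncomputable def bSeq (S : List ℕ → Set ℕ) (n : ℕ) : ℕ :=
  stepB S (twoPlays S n).1 (twoPlays S n).2

lemma twoPlays_succ (S : List ℕ → Set ℕ) (n : ℕ) :
    twoPlays S (n + 1) =
      ((twoPlays S n).1 ++ [aSeq S n], (twoPlays S n).2 ++ [bSeq S n]) := rfl

variable {S : List ℕ → Set ℕ}

lemma twoPlays_fst_eq (S : List ℕ → Set ℕ) (n : ℕ) :
    (twoPlays S n).1 = List.ofFn (fun i : Fin n => aSeq S i) := by
  induction n with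
  | zero => rfl
  | succ n ih =>
      rw [twoPlays_succ, List.ofFn_succ']
      simp [ih]

lemma twoPlays_snd_eq (S : List ℕ → Set ℕ) (n : ℕ) :
    (twoPlays S n).2 = List.ofFn (fun i : Fin n => bSeq S i) := by
  induction n with
  | zero => rfl
  | succ n ih =>
      rw [twoPlays_succ, List.ofFn_succ']
      simp [ih]

lemma mem_fst_of_lt (S : List ℕ → Set ℕ) {m n : ℕ} (h : m < n) :
    aSeq S m ∈ (twoPlays S n).1 := by
  rw [twoPlays_fst_eq]
  exact List.mem_ofFn.2 ⟨⟨m, h⟩, rfl⟩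

lemma mem_snd_of_lt (S : List ℕ → Set ℕ) {m n : ℕ} (h : m < n) :
    bSeq S m ∈ (twoPlays S n).2 := by
  rw [twoPlays_snd_eq]
  exact List.mem_ofFn.2 ⟨⟨m, h⟩, rfl⟩

lemma aSeq_spec (hS : ∀ l, (S l).Infinite) (n : ℕ) :
    aSeq S n ∈ S (twoPlays S n).1 ∧
      aSeq S n ∉ (twoPlays S n).1.toFinset ∪ (twoPlays S n).2.toFinset :=
  freshPick_spec (hS _) _

lemma bSeq_spec (hS : ∀ l, (S l).Infinite) (n : ℕ) :
    bSeq S n ∈ S (twoPlays S n).2 ∧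
      bSeq S n ∉ insert (aSeq S n) ((twoPlays S n).1.toFinset ∪ (twoPlays S n).2.toFinset) :=
  freshPick_spec (hS _) _

lemma aSeq_ne_bSeq (hS : ∀ l, (S l).Infinite) (m n : ℕ) :
    aSeq S m ≠ bSeq S n := by
  rcases lt_trichotomy m n with h | h | h
  · intro he
    have hb := (bSeq_spec hS n).2
    apply hb
    rw [← he]
    exact Finset.mem_insert_of_mem (Finset.mem_union_left _
      (List.mem_toFinset.2 (mem_fst_of_lt S h)))
  · intro he
    subst h
    apply (bSeq_spec hS m).2
    rw [← he]
    exact Finset.mem_insert_self _ _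
  · intro he
    have ha := (aSeq_spec hS m).2
    apply ha
    rw [he]
    exact Finset.mem_union_right _ (List.mem_toFinset.2 (mem_snd_of_lt S h))

/-- Key separation fact: closures in βℕ of images of disjoint subsets of ℕ are disjoint. -/
lemma stoneCech_disjoint_closures {A B : Set ℕ} (hAB : ∀ n, n ∈ A → n ∉ B)
    {x : StoneCech ℕ} (hA : x ∈ closure (stoneCechUnit '' A))
    (hB : x ∈ closure (stoneCechUnit '' B)) : False := by
  classical
  set f : ℕ → Bool := fun n => decide (n ∈ A) with hf
  have hcf : Continuous f := continuous_of_discreteTopology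
  set g := stoneCechExtend hcf with hg
  have hext := stoneCechExtend_extends hcf
  have hgc : Continuous g := continuous_stoneCechExtend hcf
  have h1 : closure (stoneCechUnit '' A) ⊆ g ⁻¹' {true} := by
    apply closure_minimal _ (IsClosed.preimage hgc (isClosed_discrete _))
    rintro _ ⟨n, hn, rfl⟩
    have : g (stoneCechUnit n) = f n := congrFun hext n
    simp [this, hf, hn]
  have h2 : closure (stoneCechUnit '' B) ⊆ g ⁻¹' {false} := by
    apply closure_minimal _ (IsClosed.preimage hgc (isClosed_discrete _))
    rintro _ ⟨n, hn, rfl⟩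
    have : g (stoneCechUnit n) = f n := congrFun hext n
    have hnA : n ∉ A := fun h => hAB n h hn
    simp [this, hf, hnA]
  have := h1 hA
  have := h2 hB
  simp_all

lemma stoneCechUnit_nat_injective : Function.Injective (stoneCechUnit : ℕ → StoneCech ℕ) := by
  intro a b h
  classical
  have hcf : Continuous (fun n : ℕ => decide (n = a)) := continuous_of_discreteTopology
  have := eq_if_stoneCechUnit_eq hcf h
  have h2 : b = a := by simpa using this
  exact h2.symm

/-- Every point of the image of ℕ in βℕ is isolated. -/
lemma isolated_unit (n : ℕ) : IsOpen ({stoneCechUnit n} : Set (StoneCech ℕ)) := by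
  classical
  have hcf : Continuous (fun m : ℕ => decide (m = n)) := continuous_of_discreteTopology
  set g := stoneCechExtend hcf with hg
  have hext := stoneCechExtend_extends hcf
  have hgc : Continuous g := continuous_stoneCechExtend hcf
  have hU : IsOpen (g ⁻¹' {true}) := IsOpen.preimage hgc (isOpen_discrete _)
  have hsub : g ⁻¹' {true} ⊆ {stoneCechUnit n} := by
    have hdense : Dense (range (stoneCechUnit : ℕ → StoneCech ℕ)) := denseRange_stoneCechUnit
    have h1 : g ⁻¹' {true} ⊆ closure (g ⁻¹' {true} ∩ range stoneCechUnit) :=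
      hdense.open_subset_closure_inter hU
    have h2 : g ⁻¹' {true} ∩ range stoneCechUnit ⊆ {stoneCechUnit n} := by
      rintro _ ⟨hmem, m, rfl⟩
      have : g (stoneCechUnit m) = decide (m = n) := congrFun hext m
      have hm : decide (m = n) = true := by rw [← this]; exact hmem
      simp only [decide_eq_true_eq] at hm
      simp [hm]
    calc g ⁻¹' {true} ⊆ closure (g ⁻¹' {true} ∩ range stoneCechUnit) := h1
      _ ⊆ closure ({stoneCechUnit n} : Set (StoneCech ℕ)) := closure_mono h2
      _ = {stoneCechUnit n} := closure_singleton
  have hmemU : stoneCechUnit n ∈ g ⁻¹' {true} := by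
    have : g (stoneCechUnit n) = decide (n = n) := congrFun hext n
    simp [mem_preimage, this]
  have : g ⁻¹' {true} = {stoneCechUnit n} :=
    Subset.antisymm hsub (by simpa using hmemU)
  rw [← this]; exact hU

lemma exists_not_mem_range : ∃ x : StoneCech ℕ, x ∉ range (stoneCechUnit : ℕ → StoneCech ℕ) := by
  by_contra h
  push_neg at h
  have hsurj : Function.Surjective (stoneCechUnit : ℕ → StoneCech ℕ) := fun x => h x
  have : DiscreteTopology (StoneCech ℕ) := by
    constructor
    apply eq_bot_of_singletons_open
    intro x
    obtain ⟨n, rfl⟩ := hsurj x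
    exact isolated_unit n
  have : Finite (StoneCech ℕ) := finite_of_compact_of_discrete
  exact (Finite.of_injective _ stoneCechUnit_nat_injective).false

/-- If `x` is outside the image of ℕ, each open set containing `x` contains
infinitely many points of ℕ. -/
lemma infinite_unit_mem {x : StoneCech ℕ} (hx : x ∉ range (stoneCechUnit : ℕ → StoneCech ℕ))
    {U : Set (StoneCech ℕ)} (hU : IsOpen U) (hxU : x ∈ U) :
    {m : ℕ | stoneCechUnit m ∈ U}.Infinite := by
  by_contra hinf
  rw [Set.not_infinite] at hinf
  have hfin := hinf
  have hfin' : (stoneCechUnit '' {m : ℕ | stoneCechUnit m ∈ U}).Finite := hfin.image _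
  have hcl : IsClosed (stoneCechUnit '' {m : ℕ | stoneCechUnit m ∈ U}) := hfin'.isClosed
  have hV : IsOpen (U \ stoneCechUnit '' {m : ℕ | stoneCechUnit m ∈ U}) := hU.sdiff hcl
  have hxV : x ∈ U \ stoneCechUnit '' {m : ℕ | stoneCechUnit m ∈ U} := by
    refine ⟨hxU, fun ⟨m, _, hm⟩ => hx ⟨m, hm⟩⟩
  obtain ⟨m, hm⟩ := denseRange_stoneCechUnit.exists_mem_open hV ⟨x, hxV⟩
  exact hm.2 ⟨m, hm.1, rfl⟩

lemma clusterPt_mem_closure_range {X : Type*} [TopologicalSpace X] {x : X} {p : ℕ → X}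
    (h : MapClusterPt x atTop p) : x ∈ closure (range p) := by
  rw [mem_closure_iff_clusterPt]
  exact h.clusterPt.mono (le_principal_iff.2 range_mem_map)

/-- The Stone–Čech compactification of ℕ is not a W-space: some point is not a W-point. -/
theorem stoneCech_nat_not_W_space :
    ∃ x : StoneCech ℕ, ¬ IsWPoint x := by
  obtain ⟨x, hx⟩ := exists_not_mem_range
  refine ⟨x, ?_⟩
  rintro ⟨σ, hσ, hwin⟩
  set S : List ℕ → Set ℕ := fun l => {m | stoneCechUnit m ∈ σ (l.map stoneCechUnit)} with hSdef
  have hS : ∀ l, (S l).Infinite := fun l =>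
    infinite_unit_mem hx (hσ _).1 (hσ _).2
  -- the two plays
  set p : ℕ → StoneCech ℕ := fun n => stoneCechUnit (aSeq S n) with hp
  set q : ℕ → StoneCech ℕ := fun n => stoneCechUnit (bSeq S n) with hq
  have hofA : ∀ n, (List.ofFn fun i : Fin n => p i) = ((twoPlays S n).1).map stoneCechUnit := by
    intro n
    rw [twoPlays_fst_eq, List.map_ofFn]
    rfl
  have hofB : ∀ n, (List.ofFn fun i : Fin n => q i) = ((twoPlays S n).2).map stoneCechUnit := by
    intro n
    rw [twoPlays_snd_eq, List.map_ofFn]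
    rfl
  have hpvalid : ∀ n, p n ∈ σ (List.ofFn fun i : Fin n => p i) := by
    intro n
    rw [hofA n]
    exact (aSeq_spec hS n).1
  have hqvalid : ∀ n, q n ∈ σ (List.ofFn fun i : Fin n => q i) := by
    intro n
    rw [hofB n]
    exact (bSeq_spec hS n).1
  have hpc := clusterPt_mem_closure_range (hwin p hpvalid)
  have hqc := clusterPt_mem_closure_range (hwin q hqvalid)
  have hpsub : range p ⊆ stoneCechUnit '' (range (aSeq S)) := by
    rintro _ ⟨n, rfl⟩; exact ⟨aSeq S n, ⟨n, rfl⟩, rfl⟩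
  have hqsub : range q ⊆ stoneCechUnit '' (range (bSeq S)) := by
    rintro _ ⟨n, rfl⟩; exact ⟨bSeq S n, ⟨n, rfl⟩, rfl⟩
  refine stoneCech_disjoint_closures (A := range (aSeq S)) (B := range (bSeq S))
    ?_ (closure_mono hpsub hpc) (closure_mono hqsub hqc)
  rintro _ ⟨m, rfl⟩ ⟨n, hn⟩
  exact aSeq_ne_bSeq hS m n hn.symm
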